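/- In a ribbon Hopf algebra A with special grouplike element G and Drinfeld element u = Σ s(e')e (where ρ = Σ e ⊗ e'), the square of the antipode is conjugation by G: s²(x) = G x G^{-1} for all x ∈ A, and the central element v = G^{-1}u satisfies s(v) = v. -/

import Mathlib

open scoped TensorProduct

open Coalgebra HopfAlgebra

lemma antipode_grouplike_mul {k A : Type*} [CommRing k] [Ring A] [HopfAlgebra k A]
    (g g' x : A) (hg : comul (R := k) g = g ⊗ₜ[k] g)
    (hεg : counit (R := k) g = (1 : k))
    (hgg' : g * g' = 1) :
    antipode (R := k) (g * x) = antipode (R := k) x * g' := by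
  set S : A →ₗ[k] A := antipode (R := k) (A := A) with hS
  let r : Repr k x (A × A) := ℛ k x
  let r1 : ∀ i, Repr k (r.left i) (A × A) := fun i => ℛ k _
  let r2 : ∀ i, Repr k (r.right i) (A × A) := fun i => ℛ k _
  have hxL : ∑ i ∈ r.index, counit (R := k) (r.left i) • r.right i = x := by
    have h := congrArg (TensorProduct.lid k A) (sum_counit_tmul_eq r)
    simp only [map_sum, TensorProduct.lid_tmul, one_smul] at h
    exact h
  have hxR : ∑ i ∈ r.index, counit (R := k) (r.right i) • r.left i = x := by
    have h := congrArg (TensorProduct.rid k A) (sum_tmul_counit_eq r)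
    simp only [map_sum, TensorProduct.rid_tmul, one_smul] at h
    exact h
  -- a representation of `comul (g * a)` from one of `comul a`
  have hRg : ∀ i, ∑ j ∈ (r1 i).index,
      (g * (r1 i).left j) ⊗ₜ[k] (g * (r1 i).right j) = comul (R := k) (g * r.left i) := by
    intro i
    rw [Bialgebra.comul_mul, hg, ← (r1 i).eq, Finset.mul_sum]
    simp [Algebra.TensorProduct.tmul_mul_tmul]
  let Rg : ∀ i, Repr k (g * r.left i) (A × A) := fun i =>
    { index := (r1 i).index
      left := fun j => g * (r1 i).left j
      right := fun j => g * (r1 i).right j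
      eq := hRg i }
  have step1 : S x * g' = ∑ i ∈ r.index, ∑ j ∈ (r1 i).index,
      S (g * (r1 i).left j) * ((g * (r1 i).right j) * (S (r.right i) * g')) := by
    conv_lhs => rw [← hxL]
    rw [map_sum, Finset.sum_mul]
    refine Finset.sum_congr rfl fun i _ => ?_
    have hA : (algebraMap k A) (counit (R := k) (r.left i)) =
        ∑ j ∈ (r1 i).index, S (g * (r1 i).left j) * (g * (r1 i).right j) := by
      have h := sum_antipode_mul_eq_algebraMap_counit (R := k) (Rg i)
      rw [Bialgebra.counit_mul, hεg, one_mul] at h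
      exact h.symm
    rw [map_smul, smul_mul_assoc, Algebra.smul_def, hA, Finset.sum_mul]
    refine Finset.sum_congr rfl fun j _ => by rw [mul_assoc]
  have key := sum_tmul_tmul_eq (R := k) r r1 r2
  apply_fun (LinearMap.mul' k A ∘ₗ LinearMap.lTensor A (LinearMap.mul' k A) ∘ₗ
      TensorProduct.map (S ∘ₗ LinearMap.mulLeft k g)
        (TensorProduct.map (LinearMap.mulLeft k g)
          (LinearMap.mulRight k g' ∘ₗ S))) at key
  simp only [map_sum, LinearMap.coe_comp, Function.comp_apply, TensorProduct.map_tmul,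
    LinearMap.lTensor_tmul, LinearMap.mul'_apply, LinearMap.mulLeft_apply,
    LinearMap.mulRight_apply] at key
  have step3 : ∑ i ∈ r.index, ∑ j ∈ (r2 i).index,
      S (g * r.left i) * ((g * (r2 i).left j) * (S ((r2 i).right j) * g')) = S (g * x) := by
    have inner : ∀ i, ∑ j ∈ (r2 i).index, (g * (r2 i).left j) * (S ((r2 i).right j) * g')
        = algebraMap k A (counit (R := k) (r.right i)) := by
      intro i
      have h := sum_mul_antipode_eq_algebraMap_counit (R := k) (r2 i)
      calc ∑ j ∈ (r2 i).index, (g * (r2 i).left j) * (S ((r2 i).right j) * g')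
          = g * (∑ j ∈ (r2 i).index, (r2 i).left j * S ((r2 i).right j)) * g' := by
            rw [Finset.mul_sum, Finset.sum_mul]
            exact Finset.sum_congr rfl fun j _ => by simp [mul_assoc]
        _ = g * algebraMap k A (counit (R := k) (r.right i)) * g' := by rw [h]
        _ = algebraMap k A (counit (R := k) (r.right i)) * (g * g') := by
            rw [← Algebra.commutes, mul_assoc]
        _ = algebraMap k A (counit (R := k) (r.right i)) := by rw [hgg', mul_one]
    calc ∑ i ∈ r.index, ∑ j ∈ (r2 i).index,
        S (g * r.left i) * ((g * (r2 i).left j) * (S ((r2 i).right j) * g'))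
        = ∑ i ∈ r.index, S (g * r.left i) * algebraMap k A (counit (R := k) (r.right i)) := by
          refine Finset.sum_congr rfl fun i _ => ?_
          rw [← Finset.mul_sum, inner i]
      _ = ∑ i ∈ r.index, counit (R := k) (r.right i) • S (g * r.left i) := by
          refine Finset.sum_congr rfl fun i _ => ?_
          rw [Algebra.smul_def, Algebra.commutes]
      _ = S (g * x) := by
          conv_rhs => rw [← hxR]
          rw [Finset.mul_sum, map_sum]
          exact Finset.sum_congr rfl fun i _ => by rw [mul_smul_comm, map_smul]
  exact ((step1.trans key).trans step3).symm

/-- In a ribbon Hopf algebra `A` with special grouplike element `G` and Drinfeld element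
`u = Σ s(e') e` (where `ρ = Σ e ⊗ e'` and `s²(x) = u x u⁻¹` for all `x`, `v = G⁻¹u` is
central, and `s(u) = G⁻¹ u G⁻¹`), the square of the antipode is conjugation by `G`:
`s²(x) = G x G⁻¹` for all `x`, and the central element `v = G⁻¹u` satisfies `s(v) = v`. -/
theorem stmt_18 (k A : Type*) [CommRing k] [Ring A] [HopfAlgebra k A]
    (ρ : A ⊗[k] A) (u u' G G' : A)
    (hu_def : u = LinearMap.mul' k A
      (LinearMap.rTensor A (HopfAlgebra.antipode (R := k) (A := A))
        ((TensorProduct.comm k A A) ρ)))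
    (hu : u * u' = 1 ∧ u' * u = 1)
    (hG : G * G' = 1 ∧ G' * G = 1)
    (hGgrp : Coalgebra.comul (R := k) G = G ⊗ₜ[k] G ∧
      Coalgebra.counit (R := k) G = (1 : k) ∧
      HopfAlgebra.antipode (R := k) G = G')
    (hs2 : ∀ x : A, HopfAlgebra.antipode (R := k) (HopfAlgebra.antipode (R := k) x) =
      u * x * u')
    (hcentral : ∀ x : A, (G' * u) * x = x * (G' * u))
    (hsu : HopfAlgebra.antipode (R := k) u = G' * u * G') :
    (∀ x : A, HopfAlgebra.antipode (R := k) (HopfAlgebra.antipode (R := k) x) =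
      G * x * G') ∧
    HopfAlgebra.antipode (R := k) (G' * u) = G' * u := by
  obtain ⟨huu', hu'u⟩ := hu
  obtain ⟨hGG', hG'G⟩ := hG
  obtain ⟨hcomulG, hcounitG, hsG⟩ := hGgrp
  -- Part 1: s²(x) = G x G'
  have part1 : ∀ x : A, HopfAlgebra.antipode (R := k) (HopfAlgebra.antipode (R := k) x) =
      G * x * G' := by
    intro x
    rw [hs2 x]
    calc u * x * u' = G * (G' * u) * x * u' := by
          rw [← mul_assoc G G' u, hGG', one_mul]
      _ = G * (x * (G' * u)) * u' := by rw [mul_assoc G, hcentral x]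
      _ = G * x * G' * (u * u') := by
          rw [mul_assoc G x, ← mul_assoc x G' u]
          rw [← mul_assoc G (x * G') u, ← mul_assoc (G * (x * G')) u u',
            ← mul_assoc G x G', mul_assoc (G * x * G') u u']
      _ = G * x * G' := by rw [huu', mul_one]
  refine ⟨part1, ?_⟩
  -- G' is grouplike
  have hcomulG' : Coalgebra.comul (R := k) G' = G' ⊗ₜ[k] G' := by
    have h1 : Coalgebra.comul (R := k) G' * (G ⊗ₜ[k] G) = 1 := by
      rw [← hcomulG, ← Bialgebra.comul_mul, hG'G, Bialgebra.comul_one]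
    have h2 : (G ⊗ₜ[k] G) * (G' ⊗ₜ[k] G') = 1 := by
      rw [Algebra.TensorProduct.tmul_mul_tmul, hGG']
      rfl
    calc Coalgebra.comul (R := k) G'
        = Coalgebra.comul (R := k) G' * ((G ⊗ₜ[k] G) * (G' ⊗ₜ[k] G')) := by
          rw [h2, mul_one]
      _ = (Coalgebra.comul (R := k) G' * (G ⊗ₜ[k] G)) * (G' ⊗ₜ[k] G') := by
          rw [mul_assoc]
      _ = G' ⊗ₜ[k] G' := by rw [h1, one_mul]
  have hcounitG' : Coalgebra.counit (R := k) G' = (1 : k) := by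
    have h := congrArg (Coalgebra.counit (R := k)) hG'G
    rw [Bialgebra.counit_mul, hcounitG, mul_one, Bialgebra.counit_one] at h
    exact h
  -- s(G' * u) = s(u) * G = G' * u * G' * G = G' * u
  rw [antipode_grouplike_mul (k := k) G' G u hcomulG' hcounitG' hG'G, hsu,
    mul_assoc (G' * u) G' G, hG'G, mul_one]
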